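/- Let F be an algebraically closed field, f(ξ) ∈ F[ξ] a nonzero polynomial of degree n > 1 with zero constant term, and c an element of the split octonion algebra O over F. If there exist γ ∈ F and an F-algebra automorphism g of O with g(c) = γ·1 + u₁, then the set X = {x ∈ O : f(x) = c} has at most n elements. -/

import Mathlib

noncomputable section

/-- The split octonion algebra over `F`, given by Zorn vector matrices
`(x1, u; v, x2)` with `x1, x2 ∈ F` and `u, v ∈ F³`. -/
@[ext]
structure SplitOctonion (F : Type*) where
  x1 : F
  u : Fin 3 → F
  v : Fin 3 → F
  x2 : F

namespace SplitOctonion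

variable {F : Type*} [Field F]

/-- Dot product on `F³`. -/
def dot (x y : Fin 3 → F) : F := x 0 * y 0 + x 1 * y 1 + x 2 * y 2

/-- Cross product on `F³`. -/
def cross (x y : Fin 3 → F) : Fin 3 → F :=
  ![x 1 * y 2 - x 2 * y 1, x 2 * y 0 - x 0 * y 2, x 0 * y 1 - x 1 * y 0]

instance : Zero (SplitOctonion F) := ⟨⟨0, 0, 0, 0⟩⟩
instance : One (SplitOctonion F) := ⟨⟨1, 0, 0, 1⟩⟩
instance : Add (SplitOctonion F) :=
  ⟨fun x y => ⟨x.x1 + y.x1, x.u + y.u, x.v + y.v, x.x2 + y.x2⟩⟩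
instance : Neg (SplitOctonion F) := ⟨fun x => ⟨-x.x1, -x.u, -x.v, -x.x2⟩⟩
instance : SMul F (SplitOctonion F) :=
  ⟨fun c x => ⟨c * x.x1, c • x.u, c • x.v, c * x.x2⟩⟩

/-- Zorn vector matrix multiplication. -/
instance : Mul (SplitOctonion F) :=
  ⟨fun x y => ⟨x.x1 * y.x1 + dot x.u y.v,
    x.x1 • y.u + y.x2 • x.u - cross x.v y.v,
    y.x1 • x.v + x.x2 • y.v + cross x.u y.u,
    x.x2 * y.x2 + dot x.v y.u⟩⟩

@[simp] lemma zero_x1 : (0 : SplitOctonion F).x1 = 0 := rfl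
@[simp] lemma zero_u : (0 : SplitOctonion F).u = 0 := rfl
@[simp] lemma zero_v : (0 : SplitOctonion F).v = 0 := rfl
@[simp] lemma zero_x2 : (0 : SplitOctonion F).x2 = 0 := rfl
@[simp] lemma add_x1 (x y : SplitOctonion F) : (x + y).x1 = x.x1 + y.x1 := rfl
@[simp] lemma add_u (x y : SplitOctonion F) : (x + y).u = x.u + y.u := rfl
@[simp] lemma add_v (x y : SplitOctonion F) : (x + y).v = x.v + y.v := rfl
@[simp] lemma add_x2 (x y : SplitOctonion F) : (x + y).x2 = x.x2 + y.x2 := rfl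
@[simp] lemma neg_x1 (x : SplitOctonion F) : (-x).x1 = -x.x1 := rfl
@[simp] lemma neg_u (x : SplitOctonion F) : (-x).u = -x.u := rfl
@[simp] lemma neg_v (x : SplitOctonion F) : (-x).v = -x.v := rfl
@[simp] lemma neg_x2 (x : SplitOctonion F) : (-x).x2 = -x.x2 := rfl
@[simp] lemma smul_x1 (c : F) (x : SplitOctonion F) : (c • x).x1 = c * x.x1 := rfl
@[simp] lemma smul_u (c : F) (x : SplitOctonion F) : (c • x).u = c • x.u := rfl
@[simp] lemma smul_v (c : F) (x : SplitOctonion F) : (c • x).v = c • x.v := rfl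
@[simp] lemma smul_x2 (c : F) (x : SplitOctonion F) : (c • x).x2 = c * x.x2 := rfl

instance : AddCommGroup (SplitOctonion F) where
  add_assoc x y z := by ext <;> simp [add_assoc]
  zero_add x := by ext <;> simp
  add_zero x := by ext <;> simp
  add_comm x y := by ext <;> simp [add_comm]
  neg_add_cancel x := by ext <;> simp
  nsmul := nsmulRec
  zsmul := zsmulRec

instance : Module F (SplitOctonion F) where
  one_smul x := by ext <;> simp
  mul_smul c d x := by ext <;> simp [mul_assoc, mul_smul]
  smul_zero c := by ext <;> simp
  smul_add c x y := by ext <;> simp [mul_add, smul_add]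
  add_smul c d x := by ext <;> simp [add_mul, add_smul]
  zero_smul x := by ext <;> simp

/-- Powers of a single octonion (well defined by power-associativity). -/
def npow (x : SplitOctonion F) : ℕ → SplitOctonion F
  | 0 => 1
  | n + 1 => npow x n * x

instance : Pow (SplitOctonion F) ℕ := ⟨npow⟩

/-- Substitution of an octonion into a polynomial over `F`:
`f(x) = αₙ xⁿ + ⋯ + α₁ x + α₀ • 1`. -/
def peval (f : Polynomial F) (x : SplitOctonion F) : SplitOctonion F :=
  f.sum fun i c => c • x ^ i

/-- The octonion `e₁`. -/
def e1 : SplitOctonion F := ⟨1, 0, 0, 0⟩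
/-- The octonion `e₂`. -/
def e2 : SplitOctonion F := ⟨0, 0, 0, 1⟩
/-- The octonion `u₁`. -/
def u1 : SplitOctonion F := ⟨0, ![1, 0, 0], 0, 0⟩

/-- Conjugation on `O`. -/
def conj (x : SplitOctonion F) : SplitOctonion F := ⟨x.x2, -x.u, -x.v, x.x1⟩

/-- The norm of an octonion. -/
def normO (x : SplitOctonion F) : F := x.x1 * x.x2 - dot x.u x.v

/-- The trace of an octonion. -/
def trO (x : SplitOctonion F) : F := x.x1 + x.x2

/-- `g` is an `F`-algebra automorphism of `O`: a linear bijection preserving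
multiplication (and the unit). -/
def IsAlgAut (g : SplitOctonion F ≃ₗ[F] SplitOctonion F) : Prop :=
  g 1 = 1 ∧ ∀ x y, g (x * y) = g x * g y

end SplitOctonion
namespace SplitOctonion
variable {F : Type*} [Field F]

@[simp] lemma one_x1 : (1 : SplitOctonion F).x1 = 1 := rfl
@[simp] lemma one_u : (1 : SplitOctonion F).u = 0 := rfl
@[simp] lemma one_v : (1 : SplitOctonion F).v = 0 := rfl
@[simp] lemma one_x2 : (1 : SplitOctonion F).x2 = 1 := rfl
@[simp] lemma mul_x1 (x y : SplitOctonion F) : (x * y).x1 = x.x1 * y.x1 + dot x.u y.v := rfl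
@[simp] lemma mul_u (x y : SplitOctonion F) :
    (x * y).u = x.x1 • y.u + y.x2 • x.u - cross x.v y.v := rfl
@[simp] lemma mul_v (x y : SplitOctonion F) :
    (x * y).v = y.x1 • x.v + x.x2 • y.v + cross x.u y.u := rfl
@[simp] lemma mul_x2 (x y : SplitOctonion F) : (x * y).x2 = x.x2 * y.x2 + dot x.v y.u := rfl

lemma add_mul' (x y z : SplitOctonion F) : (x + y) * z = x * z + y * z := by
  ext i <;> try fin_cases i
  all_goals simp [dot, cross, Matrix.vecHead, Matrix.vecTail, Function.comp, sub_eq_add_neg] <;> ring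

lemma mul_add' (x y z : SplitOctonion F) : x * (y + z) = x * y + x * z := by
  ext i <;> try fin_cases i
  all_goals simp [dot, cross, Matrix.vecHead, Matrix.vecTail, Function.comp, sub_eq_add_neg] <;> ring

lemma smul_mul' (c : F) (x y : SplitOctonion F) : (c • x) * y = c • (x * y) := by
  ext i <;> try fin_cases i
  all_goals simp [dot, cross, Matrix.vecHead, Matrix.vecTail, Function.comp, sub_eq_add_neg] <;> ring

lemma mul_smul'' (c : F) (x y : SplitOctonion F) : x * (c • y) = c • (x * y) := by
  ext i <;> try fin_cases i
  all_goals simp [dot, cross, Matrix.vecHead, Matrix.vecTail, Function.comp, sub_eq_add_neg] <;> ring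

lemma one_mul' (x : SplitOctonion F) : 1 * x = x := by
  ext i <;> try fin_cases i
  all_goals simp [dot, cross, Matrix.vecHead, Matrix.vecTail, Function.comp, sub_eq_add_neg]

lemma mul_one' (x : SplitOctonion F) : x * 1 = x := by
  ext i <;> try fin_cases i
  all_goals simp [dot, cross, Matrix.vecHead, Matrix.vecTail, Function.comp, sub_eq_add_neg]

lemma sq' (x : SplitOctonion F) : x * x = trO x • x - normO x • 1 := by
  ext i <;> try fin_cases i
  all_goals simp [dot, cross, trO, normO, Matrix.vecHead, Matrix.vecTail, Function.comp, sub_eq_add_neg] <;> ring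

lemma u1_mul_u1 : (u1 : SplitOctonion F) * u1 = 0 := by
  ext i <;> try fin_cases i
  all_goals simp [dot, cross, u1, Matrix.vecHead, Matrix.vecTail, Function.comp, sub_eq_add_neg]

@[simp] lemma u1_x1 : (u1 : SplitOctonion F).x1 = 0 := rfl
@[simp] lemma u1_u : (u1 : SplitOctonion F).u = ![1,0,0] := rfl
@[simp] lemma u1_v : (u1 : SplitOctonion F).v = 0 := rfl
@[simp] lemma u1_x2 : (u1 : SplitOctonion F).x2 = 0 := rfl

lemma pow_zero' (x : SplitOctonion F) : x ^ (0:ℕ) = 1 := rfl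
lemma pow_succ' (x : SplitOctonion F) (k : ℕ) : x ^ (k+1) = x ^ k * x := rfl

/-- every power lies in the span of `1` and `x`. -/
lemma pow_mem_span (x : SplitOctonion F) : ∀ k : ℕ, ∃ a b : F, x ^ k = a • 1 + b • x := by
  intro k
  induction k with
  | zero => exact ⟨1, 0, by rw [pow_zero', one_smul, zero_smul, add_zero]⟩
  | succ k ih =>
    obtain ⟨a, b, hab⟩ := ih
    refine ⟨-(b * normO x), a + b * trO x, ?_⟩
    rw [pow_succ', hab, add_mul', smul_mul', smul_mul', one_mul', sq']
    rw [smul_sub, smul_smul, smul_smul, sub_eq_add_neg, ← neg_smul]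
    module

open Polynomial in
lemma peval_decomp (f : Polynomial F) (x : SplitOctonion F) :
    ∃ a b : F, peval f x = a • 1 + b • x := by
  choose A B hAB using pow_mem_span x
  refine ⟨f.sum fun i c => c * A i, f.sum fun i c => c * B i, ?_⟩
  rw [peval, Polynomial.sum_def, Polynomial.sum_def, Polynomial.sum_def,
    Finset.sum_smul, Finset.sum_smul, ← Finset.sum_add_distrib]
  refine Finset.sum_congr rfl fun i _ => ?_
  rw [hAB i, smul_add, smul_smul, smul_smul]

lemma line_pow (l m : F) (k : ℕ) :
    (l • 1 + m • u1 : SplitOctonion F) ^ k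
      = l ^ k • 1 + ((k : F) * l ^ (k - 1) * m) • u1 := by
  induction k with
  | zero => simp [pow_zero']
  | succ k ih =>
    rw [pow_succ', ih, add_mul', smul_mul', smul_mul', one_mul', mul_add', mul_smul'',
      mul_smul'', mul_one', u1_mul_u1, smul_zero, add_zero, smul_add, smul_smul, smul_smul,
      smul_smul]
    have h1 : (l ^ k * l) = l ^ (k + 1) := by ring
    have h2 : l ^ k * m + (k : F) * l ^ (k - 1) * m * l = ((k:ℕ)+1 : F) * l ^ (k+1-1) * m := by
      cases k with
      | zero => norm_num
      | succ k => simp only [Nat.add_sub_cancel]; push_cast; ring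
    rw [add_assoc, ← add_smul, h1, h2]
    norm_num

open Polynomial in
lemma peval_line (f : Polynomial F) (l m : F) :
    peval f (l • 1 + m • u1) = f.eval l • (1 : SplitOctonion F)
      + (f.derivative.eval l * m) • u1 := by
  have hd : f.derivative.eval l = f.sum fun n a => a * n * l ^ (n - 1) := by
    rw [derivative_apply, Polynomial.sum_def, Polynomial.eval_finset_sum]
    rw [Polynomial.sum_def]
    refine Finset.sum_congr rfl fun i _ => ?_
    simp
  rw [hd, eval_eq_sum, peval, Polynomial.sum_def, Polynomial.sum_def, Polynomial.sum_def,
    Finset.sum_mul, Finset.sum_smul, Finset.sum_smul, ← Finset.sum_add_distrib]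
  refine Finset.sum_congr rfl fun i _ => ?_
  rw [line_pow, smul_add, smul_smul, smul_smul]
  ring_nf

lemma line_eq_iff (a b a' b' : F) :
    a • (1 : SplitOctonion F) + b • u1 = a' • 1 + b' • u1 → a = a' ∧ b = b' := by
  intro h
  have h1 := congrArg SplitOctonion.x1 h
  have h2 := congrArg (fun z : SplitOctonion F => z.u 0) h
  simp at h1 h2
  exact ⟨h1, h2⟩

open Polynomial in
lemma aut_peval (g : SplitOctonion F ≃ₗ[F] SplitOctonion F) (hg : IsAlgAut g)
    (f : Polynomial F) (x : SplitOctonion F) : g (peval f x) = peval f (g x) := by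
  obtain ⟨hg1, hgm⟩ := hg
  have hpow : ∀ k : ℕ, g (x ^ k) = (g x) ^ k := by
    intro k
    induction k with
    | zero => simpa [pow_zero'] using hg1
    | succ k ih => rw [pow_succ', hgm, ih, pow_succ']
  rw [peval, peval, Polynomial.sum_def, Polynomial.sum_def, map_sum]
  exact Finset.sum_congr rfl fun i _ => by rw [map_smul, hpow]

end SplitOctonion

open SplitOctonion Polynomial in
/-- if `c` is conjugate to `γ·1 + u₁`, then `f(x) = c` has at most
`n = deg f` solutions. -/
theorem card_solutions_le_of_conjugate_nilpotent_type {F : Type*} [Field F] [IsAlgClosed F]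
    (f : Polynomial F) (hf : f ≠ 0) (hdeg : 1 < f.natDegree) (hf0 : f.coeff 0 = 0)
    (c : SplitOctonion F)
    (hc : ∃ γ : F, ∃ g : SplitOctonion F ≃ₗ[F] SplitOctonion F, IsAlgAut g ∧
      g c = γ • (1 : SplitOctonion F) + u1) :
    {x : SplitOctonion F | peval f x = c}.Finite ∧
      {x : SplitOctonion F | peval f x = c}.ncard ≤ f.natDegree := by
  classical
  obtain ⟨γ, g, hg, hgc⟩ := hc
  set X : Set (SplitOctonion F) := {x | peval f x = c} with hX
  set X' : Set (SplitOctonion F) := {y | peval f y = γ • 1 + u1} with hX'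
  -- X' is the image of X under g
  have himg : X' = ⇑g '' X := by
    ext y
    constructor
    · intro hy
      refine ⟨g.symm y, ?_, g.apply_symm_apply y⟩
      have : g (peval f (g.symm y)) = g c := by
        rw [aut_peval g hg, g.apply_symm_apply, hgc]; exact hy
      exact g.injective this
    · rintro ⟨x, hx, rfl⟩
      show peval f (g x) = γ • 1 + u1
      rw [← aut_peval g hg, hx, hgc]
  -- the key structure of elements of X'
  have hkey : ∀ y ∈ X', y = y.x1 • 1 + y.u 0 • u1 ∧ f.eval y.x1 = γ ∧
      f.derivative.eval y.x1 * y.u 0 = 1 := by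
    intro y hy
    have hy' : peval f y = γ • 1 + u1 := hy
    obtain ⟨a, b, hab⟩ := peval_decomp f y
    have hb : b ≠ 0 := by
      rintro rfl
      rw [hab] at hy'
      have := congrArg (fun z : SplitOctonion F => z.u 0) hy'
      simp at this
    have hyline : y = (b⁻¹ * (γ - a)) • 1 + b⁻¹ • u1 := by
      have h2 : b • y = (γ - a) • 1 + u1 := by
        have : a • (1 : SplitOctonion F) + b • y = γ • 1 + u1 := by rw [← hab, hy']
        have h3 := congrArg (fun z => z + (-(a • (1 : SplitOctonion F)))) this
        rw [show a • (1 : SplitOctonion F) + b • y + -(a • 1) = b • y by abel] at h3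
        rw [h3, sub_smul]; abel
      calc y = b⁻¹ • (b • y) := by rw [smul_smul, inv_mul_cancel₀ hb, one_smul]
        _ = (b⁻¹ * (γ - a)) • 1 + b⁻¹ • u1 := by
            rw [h2, smul_add, smul_smul]
    set l := b⁻¹ * (γ - a)
    have hcalc : peval f y = f.eval l • 1 + (f.derivative.eval l * b⁻¹) • u1 := by
      rw [hyline]; exact peval_line f l b⁻¹
    have heq : f.eval l = γ ∧ f.derivative.eval l * b⁻¹ = 1 :=
      line_eq_iff _ _ _ _ (by rw [← hcalc, hy', one_smul])
    have hx1 : y.x1 = l := by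
      have := congrArg SplitOctonion.x1 hyline; simpa using this
    have hu0 : y.u 0 = b⁻¹ := by
      have := congrArg (fun z : SplitOctonion F => z.u 0) hyline; simpa using this
    rw [hx1, hu0]
    exact ⟨hyline, heq.1, heq.2⟩
  -- inject X' into the roots of f - C γ
  have hp : f - C γ ≠ 0 := by
    intro h
    have : f = C γ := by rwa [sub_eq_zero] at h
    rw [this, natDegree_C] at hdeg; omega
  set T : Set F := {l | (f - C γ).IsRoot l} with hT
  have hTfin : T.Finite := Polynomial.finite_setOf_isRoot hp
  have hmaps : ∀ y ∈ X', y.x1 ∈ T := by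
    intro y hy
    have := (hkey y hy).2.1
    simp [hT, IsRoot, this]
  have hinj : Set.InjOn (fun y : SplitOctonion F => y.x1) X' := by
    intro y hy z hz hxy
    obtain ⟨hy1, hy2, hy3⟩ := hkey y hy
    obtain ⟨hz1, hz2, hz3⟩ := hkey z hz
    simp only at hxy
    have hd0 : f.derivative.eval y.x1 ≠ 0 := left_ne_zero_of_mul_eq_one hy3
    have hu : y.u 0 = z.u 0 := by
      apply mul_left_cancel₀ hd0
      rw [hy3, hxy, hz3]
    rw [hy1, hz1, hxy, hu]
  have hX'fin : X'.Finite :=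
    Set.Finite.of_finite_image (hTfin.subset (by rintro _ ⟨y, hy, rfl⟩; exact hmaps y hy)) hinj
  have hTcard : T.ncard ≤ f.natDegree := by
    have hTeq : T = ↑(f - C γ).roots.toFinset := by
      ext l
      simp [hT, Multiset.mem_toFinset, mem_roots, hp]
    rw [hTeq, Set.ncard_coe_finset]
    calc (f - C γ).roots.toFinset.card ≤ Multiset.card (f - C γ).roots :=
          (f - C γ).roots.toFinset_card_le
      _ ≤ (f - C γ).natDegree := (f - C γ).card_roots'
      _ = f.natDegree := natDegree_sub_C
  have hX'card : X'.ncard ≤ f.natDegree := by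
    calc X'.ncard = ((fun y : SplitOctonion F => y.x1) '' X').ncard :=
          (Set.ncard_image_of_injOn hinj).symm
      _ ≤ T.ncard := Set.ncard_le_ncard (by rintro _ ⟨y, hy, rfl⟩; exact hmaps y hy) hTfin
      _ ≤ f.natDegree := hTcard
  have hXfin : X.Finite := by
    have := hX'fin
    rw [himg] at this
    exact Set.Finite.of_finite_image this g.injective.injOn
  refine ⟨hXfin, ?_⟩
  have : X'.ncard = X.ncard := by rw [himg, Set.ncard_image_of_injective _ g.injective]
  rw [← this]; exact hX'card
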